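/- arXiv:2006.01455 — 2 statements merged into one kernel-verified Lean document; each statement's English description precedes it below -/
import Mathlib

section
/- Tensor-factorization of sampled algebraic polynomials: for any univariate polynomial p of degree at most n, any L ∈ ℕ and ℓ ∈ {1,…,L−1}, the vector of values (p((j−1/2)·2^{-L}))_{j=1}^{2^L} ∈ ℂ^{2^L}, viewed as an element of ℂ^{2^ℓ} ⊗ ℂ^{2^{L−ℓ}} via j = (j₁−1)·2^{L−ℓ} + j₂, lies in the tensor product P' ⊗ P'' of two subspaces each of dimension at most n+1, namely the spaces spanned by samples of polynomials of degree ≤ n on the coarse grid and on the fine subgrid respectively. -/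
open Finset

/-- Tensor-factorization of sampled algebraic polynomials: the vector of values
of a polynomial `p` of degree `≤ n` at the midpoints `(j−1/2)·2^{-L}`,
`j = 1,…,2^L`, viewed on `ℂ^{2^ℓ} ⊗ ℂ^{2^{L−ℓ}}` via `j = (j₁−1)·2^{L−ℓ} + j₂`
(here with 0-based indices `j₁, j₂`), lies in the tensor product of the span of
samples of polynomials of degree `≤ n` on the coarse grid with the span of
samples of polynomials of degree `≤ n` on the fine subgrid; each factor
subspace has dimension at most `n+1`. -/
theorem stmt_8 (n L ℓ : ℕ) (hℓ : 1 ≤ ℓ) (hℓL : ℓ < L)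
    (p : Polynomial ℂ) (hp : p.natDegree ≤ n) :
    ∃ q r : Fin (n + 1) → Polynomial ℂ,
      (∀ k, (q k).natDegree ≤ n) ∧ (∀ k, (r k).natDegree ≤ n) ∧
      ∀ (j₁ : Fin (2 ^ ℓ)) (j₂ : Fin (2 ^ (L - ℓ))),
        p.eval (((j₁ : ℕ) : ℂ) * (2:ℂ) ^ (-(ℓ:ℤ)) + (((j₂ : ℕ) : ℂ) + 1/2) * (2:ℂ) ^ (-(L:ℤ)))
          = ∑ k : Fin (n + 1),
              (q k).eval (((j₁ : ℕ) : ℂ) * (2:ℂ) ^ (-(ℓ:ℤ))) *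
                (r k).eval ((((j₂ : ℕ) : ℂ) + 1/2) * (2:ℂ) ^ (-(L:ℤ))) := by
  refine ⟨fun k => Polynomial.hasseDeriv k p, fun k => Polynomial.X ^ (k : ℕ),
    fun k => le_trans (Polynomial.natDegree_hasseDeriv_le p k) (le_trans (Nat.sub_le _ _) hp),
    fun k => le_trans (Polynomial.natDegree_X_pow_le _) (Nat.lt_succ_iff.mp k.isLt),
    fun j₁ j₂ => ?_⟩
  set x : ℂ := ((j₁ : ℕ) : ℂ) * (2:ℂ) ^ (-(ℓ:ℤ))
  set y : ℂ := (((j₂ : ℕ) : ℂ) + 1/2) * (2:ℂ) ^ (-(L:ℤ))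
  have h1 : p.eval (x + y) = (Polynomial.taylor x p).eval y := by
    rw [Polynomial.taylor_eval, add_comm]
  rw [h1, Polynomial.eval_eq_sum_range' (lt_of_le_of_lt
    (le_of_eq (Polynomial.natDegree_taylor p x)) (Nat.lt_succ_of_le hp))]
  rw [Finset.sum_range fun i => (Polynomial.taylor x p).coeff i * y ^ i]
  refine Finset.sum_congr rfl fun k _ => ?_
  rw [Polynomial.taylor_coeff, Polynomial.eval_pow, Polynomial.eval_X]
end

section
/- Averaging is an L²-contraction after unfolding normalization: let ε = 2^{-λ} with λ ∈ ℕ, D = Y = (0,1), and define the averaging operator (𝒰^ε Φ)(x) = ∫_0^1 Φ(ε⌊x/ε⌋ + εz, {x/ε}) dz for Φ ∈ L²(D × Y), where {t} denotes the fractional part. Then ‖𝒰^ε Φ‖_{L²(D)} ≤ ‖Φ‖_{L²(D×Y)} for all Φ ∈ L²(D×Y). -/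
open MeasureTheory Set
open scoped ENNReal

namespace Stmt18Aux

lemma map_affine {a : ℝ} (ha : a ≠ 0) (b : ℝ) :
    Measure.map (fun x : ℝ => a * x + b) volume = ENNReal.ofReal |a⁻¹| • volume := by
  have h : (fun x : ℝ => a * x + b) = (fun y : ℝ => y + b) ∘ (fun x : ℝ => a * x) := rfl
  rw [h, ← Measure.map_map (measurable_add_const b) (measurable_const_mul a),
    Real.map_volume_mul_left ha, Measure.map_smul, map_add_right_eq_self]

lemma cov {a : ℝ} (ha : 0 < a) (b : ℝ) {f : ℝ → ℝ≥0∞} (hf : Measurable f)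
    {s t : Set ℝ} (ht : MeasurableSet t) (hst : (fun x : ℝ => a * x + b) ⁻¹' t = s) :
    ∫⁻ x in s, f (a * x + b) = ENNReal.ofReal a⁻¹ * ∫⁻ y in t, f y := by
  have hg : Measurable fun x : ℝ => a * x + b := (measurable_const_mul a).add_const b
  have h1 : ∫⁻ y in t, f y ∂(Measure.map (fun x : ℝ => a * x + b) volume)
      = ∫⁻ x in (fun x : ℝ => a * x + b) ⁻¹' t, f (a * x + b) := setLIntegral_map ht hf hg
  rw [map_affine ha.ne' b, hst] at h1
  rw [← h1, Measure.restrict_smul, lintegral_smul_measure, abs_of_pos (inv_pos.mpr ha), smul_eq_mul]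

lemma sum_cells (g : ℝ → ℝ≥0∞) {δ : ℝ} (hδ : 0 ≤ δ) (N : ℕ) :
    ∫⁻ x in Ico (0:ℝ) (N * δ), g x
      = ∑ k ∈ Finset.range N, ∫⁻ x in Ico ((k:ℝ) * δ) (((k:ℝ) + 1) * δ), g x := by
  induction N with
  | zero => simp
  | succ n ih =>
    rw [Finset.sum_range_succ, ← ih]
    have h1 : Ico (0:ℝ) (n * δ) ∪ Ico ((n:ℝ) * δ) (((n:ℝ) + 1) * δ)
        = Ico (0:ℝ) (((n:ℕ) + 1 : ℕ) * δ) := by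
      push_cast
      exact Ico_union_Ico_eq_Ico (by positivity) (by nlinarith)
    rw [← h1, lintegral_union measurableSet_Ico (Ico_disjoint_Ico_same)]

lemma sq_lintegral_le {α : Type*} [MeasurableSpace α] (μ : Measure α) [IsProbabilityMeasure μ]
    {f : α → ℝ≥0∞} (hf : AEMeasurable f μ) :
    (∫⁻ a, f a ∂μ) ^ 2 ≤ ∫⁻ a, f a ^ 2 ∂μ := by
  have hpq : Real.HolderConjugate 2 2 := ⟨by norm_num, by norm_num, by norm_num⟩
  have h := ENNReal.lintegral_mul_le_Lp_mul_Lq μ hpq hf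
      (aemeasurable_const : AEMeasurable (fun _ => (1:ℝ≥0∞)) μ)
  simp only [mul_one, ENNReal.one_rpow, lintegral_one, measure_univ] at h
  calc (∫⁻ a, f a ∂μ) ^ 2 ≤ ((∫⁻ a, f a ^ (2:ℝ) ∂μ) ^ ((1:ℝ)/2)) ^ 2 := by
        exact pow_le_pow_left₀ zero_le (by simpa using h) 2
    _ = ∫⁻ a, f a ^ (2:ℝ) ∂μ := by
        rw [← ENNReal.rpow_natCast _ 2, ← ENNReal.rpow_mul]
        norm_num
    _ = ∫⁻ a, f a ^ 2 ∂μ := by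
        refine lintegral_congr fun a => ?_
        rw [← ENNReal.rpow_natCast (f a) 2]; norm_num

lemma ofReal_sq (t : ℝ) : ENNReal.ofReal (t ^ 2) = (‖t‖₊ : ℝ≥0∞) ^ 2 := by
  rw [← enorm_eq_nnnorm, Real.enorm_eq_ofReal_abs, ← ENNReal.ofReal_pow (abs_nonneg t), sq_abs]


noncomputable def cellAvg (ε : ℝ) (F : ℝ → ℝ → ℝ≥0∞) (u : ℝ) : ℝ≥0∞ :=
  ∫⁻ z in Ioo (0:ℝ) 1, F (ε * ((⌊u⌋ : ℤ) : ℝ) + ε * z) (Int.fract u)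

noncomputable def sliceAvg (ε : ℝ) (F : ℝ → ℝ → ℝ≥0∞) (c : ℝ) (y : ℝ) : ℝ≥0∞ :=
  ∫⁻ z in Ioo (0:ℝ) 1, F (ε * c + ε * z) y

noncomputable def sqE (Φ : ℝ → ℝ → ℝ) (a b : ℝ) : ℝ≥0∞ := (‖Φ a b‖₊ : ℝ≥0∞) ^ 2

noncomputable def avg (ε : ℝ) (Φ : ℝ → ℝ → ℝ) (x : ℝ) : ℝ :=
  ∫ z in Ioo (0:ℝ) 1, Φ (ε * ((⌊x / ε⌋ : ℤ) : ℝ) + ε * z) (Int.fract (x / ε))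

lemma sqE_measurable {Φ : ℝ → ℝ → ℝ} (hmeas : Measurable (Function.uncurry Φ)) :
    Measurable (Function.uncurry (sqE Φ)) := by
  have h : Function.uncurry (sqE Φ)
      = fun q : ℝ × ℝ => (‖Function.uncurry Φ q‖₊ : ℝ≥0∞) ^ 2 := rfl
  rw [h]; exact hmeas.nnnorm.coe_nnreal_ennreal.pow_const 2

lemma cellAvg_measurable (ε : ℝ) {F : ℝ → ℝ → ℝ≥0∞}
    (hFm : Measurable (Function.uncurry F)) : Measurable (cellAvg ε F) := by
  unfold cellAvg
  refine Measurable.lintegral_prod_right (hFm.comp (Measurable.prodMk ?_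
    (measurable_fract.comp measurable_fst)))
  exact ((((measurable_from_top).comp (Int.measurable_floor.comp measurable_fst)).const_mul
    ε)).add (measurable_snd.const_mul ε)

lemma sliceAvg_measurable (ε : ℝ) {F : ℝ → ℝ → ℝ≥0∞}
    (hFm : Measurable (Function.uncurry F)) (c : ℝ) : Measurable (sliceAvg ε F c) := by
  unfold sliceAvg
  exact Measurable.lintegral_prod_right (hFm.comp
    (((measurable_snd.const_mul ε).const_add (ε * c)).prodMk measurable_fst))

lemma unfold_eq {ε : ℝ} (hε : 0 < ε) (N : ℕ) (hNε : (N:ℝ) * ε = 1)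
    (F : ℝ → ℝ → ℝ≥0∞) (hFm : Measurable (Function.uncurry F)) :
    ∫⁻ x in Ioo (0:ℝ) 1, cellAvg ε F (x / ε)
      = ∫⁻ x in Ioo (0:ℝ) 1, ∫⁻ y in Ioo (0:ℝ) 1, F x y := by
  have hεinv : (0:ℝ) < ε⁻¹ := inv_pos.mpr hε
  have hΘm : Measurable (cellAvg ε F) := cellAvg_measurable ε hFm
  have hdiv : ∀ x : ℝ, x / ε = ε⁻¹ * x + 0 := fun x => by
    rw [add_zero, div_eq_mul_inv, mul_comm]
  calc ∫⁻ x in Ioo (0:ℝ) 1, cellAvg ε F (x / ε)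
      = ∫⁻ x in Ico (0:ℝ) 1, cellAvg ε F (ε⁻¹ * x + 0) := by
        rw [Measure.restrict_congr_set (Ioo_ae_eq_Ico (a := (0:ℝ)) (b := 1))]
        exact lintegral_congr fun x => by rw [← hdiv]
    _ = ENNReal.ofReal ε * ∫⁻ u in Ico (0:ℝ) ((N:ℝ) * 1), cellAvg ε F u := by
        have hpre : (fun x : ℝ => ε⁻¹ * x + 0) ⁻¹' Ico (0:ℝ) ((N:ℝ) * 1) = Ico (0:ℝ) 1 := by
          have h0 : (fun x : ℝ => ε⁻¹ * x + 0) = fun x : ℝ => ε⁻¹ * x := by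
            funext x; ring
          rw [h0, Set.preimage_const_mul_Ico₀ _ _ hεinv, mul_one, zero_div, div_eq_mul_inv,
            inv_inv, hNε]
        rw [cov hεinv 0 hΘm measurableSet_Ico hpre, inv_inv]
    _ = ENNReal.ofReal ε * ∑ k ∈ Finset.range N,
          ∫⁻ u in Ico ((k:ℝ) * 1) (((k:ℝ) + 1) * 1), cellAvg ε F u := by
        rw [sum_cells (cellAvg ε F) zero_le_one N]
    _ = ENNReal.ofReal ε * ∑ k ∈ Finset.range N,
          ∫⁻ u in Ico ((k:ℝ)) ((k:ℝ) + 1), sliceAvg ε F (k:ℝ) (1 * u + -(k:ℝ)) := by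
        congr 1
        refine Finset.sum_congr rfl fun k _ => ?_
        simp only [mul_one]
        refine setLIntegral_congr_fun measurableSet_Ico (fun u hu => ?_)
        have hfl : ⌊u⌋ = (k : ℤ) := by
          rw [Int.floor_eq_iff]
          constructor
          · exact_mod_cast hu.1
          · push_cast; exact hu.2
        have hfr : Int.fract u = u - (k:ℝ) := by
          rw [Int.fract, hfl]; push_cast; ring
        unfold cellAvg sliceAvg
        rw [hfl, hfr]
        push_cast
        refine lintegral_congr fun z => ?_
        norm_num [sub_eq_add_neg]
    _ = ENNReal.ofReal ε * ∑ k ∈ Finset.range N,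
          ∫⁻ y in Ico (0:ℝ) 1, sliceAvg ε F (k:ℝ) y := by
        congr 1
        refine Finset.sum_congr rfl fun k _ => ?_
        have hpre2 : (fun u : ℝ => 1 * u + -(k:ℝ)) ⁻¹' Ico (0:ℝ) 1
            = Ico ((k:ℝ)) ((k:ℝ) + 1) := by
          ext u
          simp only [Set.mem_preimage, mem_Ico, one_mul]
          constructor
          · rintro ⟨h1, h2⟩; exact ⟨by linarith, by linarith⟩
          · rintro ⟨h1, h2⟩; exact ⟨by linarith, by linarith⟩
        rw [cov one_pos (-(k:ℝ)) (sliceAvg_measurable ε hFm (k:ℝ)) measurableSet_Ico hpre2,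
          inv_one, ENNReal.ofReal_one, one_mul]
    _ = ∑ k ∈ Finset.range N,
          ∫⁻ y in Ioo (0:ℝ) 1, ∫⁻ w in Ico ((k:ℝ) * ε) (((k:ℝ) + 1) * ε), F w y := by
        rw [Finset.mul_sum]
        refine Finset.sum_congr rfl fun k _ => ?_
        have hfy : ∀ y : ℝ, Measurable fun w => F w y := fun y =>
          hFm.comp (measurable_id.prodMk measurable_const)
        have hpre3 : (fun z : ℝ => ε * z + ε * (k:ℝ)) ⁻¹' Ioo ((k:ℝ) * ε) (((k:ℝ) + 1) * ε)
            = Ioo (0:ℝ) 1 := by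
          have hcomp : (fun z : ℝ => ε * z + ε * (k:ℝ))
              = (fun w : ℝ => w + ε * (k:ℝ)) ∘ (fun z : ℝ => ε * z) := rfl
          rw [hcomp, Set.preimage_comp, Set.preimage_add_const_Ioo,
            Set.preimage_const_mul_Ioo₀ _ _ hε]
          rw [show (k:ℝ) * ε - ε * (k:ℝ) = 0 from by ring, zero_div,
            show ((k:ℝ) + 1) * ε - ε * (k:ℝ) = ε from by ring, div_self hε.ne']
        have hcell : ∀ y : ℝ, sliceAvg ε F (k:ℝ) y
            = ENNReal.ofReal ε⁻¹ * ∫⁻ w in Ioo ((k:ℝ) * ε) (((k:ℝ) + 1) * ε), F w y := by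
          intro y
          unfold sliceAvg
          rw [show (fun z : ℝ => F (ε * (k:ℝ) + ε * z) y)
            = fun z : ℝ => F (ε * z + ε * (k:ℝ)) y by
              funext z; rw [show ε * (k:ℝ) + ε * z = ε * z + ε * (k:ℝ) from by ring]]
          exact cov hε (ε * (k:ℝ)) (hfy y) measurableSet_Ioo hpre3
        rw [Measure.restrict_congr_set (Ioo_ae_eq_Ico (a := (0:ℝ)) (b := 1)).symm]
        rw [lintegral_congr fun y => hcell y]
        rw [lintegral_const_mul' _ _ ENNReal.ofReal_ne_top, ← mul_assoc,
          ← ENNReal.ofReal_mul hε.le, mul_inv_cancel₀ hε.ne', ENNReal.ofReal_one, one_mul]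
        refine lintegral_congr fun y => ?_
        rw [Measure.restrict_congr_set (Ioo_ae_eq_Ico (a := ((k:ℝ) * ε)))]
    _ = ∫⁻ y in Ioo (0:ℝ) 1,
          ∑ k ∈ Finset.range N, ∫⁻ w in Ico ((k:ℝ) * ε) (((k:ℝ) + 1) * ε), F w y := by
        rw [← lintegral_finset_sum]
        intro k _
        exact Measurable.lintegral_prod_right (hFm.comp (measurable_snd.prodMk measurable_fst))
    _ = ∫⁻ y in Ioo (0:ℝ) 1, ∫⁻ w in Ioo (0:ℝ) 1, F w y := by
        refine lintegral_congr fun y => ?_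
        rw [← sum_cells (fun w => F w y) hε.le N, hNε,
          Measure.restrict_congr_set (Ioo_ae_eq_Ico (a := (0:ℝ)) (b := 1)).symm]
    _ = ∫⁻ x in Ioo (0:ℝ) 1, ∫⁻ y in Ioo (0:ℝ) 1, F x y := by
        exact lintegral_lintegral_swap ((hFm.comp measurable_swap).aemeasurable)

theorem main_aux {ε : ℝ} (hε : 0 < ε) (N : ℕ) (hNε : (N:ℝ) * ε = 1) (Φ : ℝ → ℝ → ℝ)
    (hmeas : Measurable (Function.uncurry Φ))
    (hint : Integrable (fun q : ℝ × ℝ => (Φ q.1 q.2) ^ 2)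
      ((volume.restrict (Set.Ioo (0:ℝ) 1)).prod (volume.restrict (Set.Ioo (0:ℝ) 1)))) :
    ∫ x in Set.Ioo (0:ℝ) 1, (avg ε Φ x) ^ 2
      ≤ ∫ x in Set.Ioo (0:ℝ) 1, ∫ y in Set.Ioo (0:ℝ) 1, (Φ x y) ^ 2 := by
  haveI hprob : IsProbabilityMeasure (volume.restrict (Ioo (0:ℝ) 1)) :=
    ⟨by rw [Measure.restrict_apply_univ, Real.volume_Ioo]; norm_num⟩
  have hFm : Measurable (Function.uncurry (sqE Φ)) := sqE_measurable hmeas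
  have hm1 : Measurable fun q : ℝ × ℝ =>
      (ε * ((⌊q.1 / ε⌋ : ℤ) : ℝ) + ε * q.2, Int.fract (q.1 / ε)) := by
    refine Measurable.prodMk ?_ (measurable_fract.comp (measurable_fst.div_const ε))
    exact (((measurable_from_top).comp
      (Int.measurable_floor.comp (measurable_fst.div_const ε))).const_mul ε).add
      (measurable_snd.const_mul ε)
  have hΨm : Measurable (Function.uncurry fun x z =>
      Φ (ε * ((⌊x / ε⌋ : ℤ) : ℝ) + ε * z) (Int.fract (x / ε))) := hmeas.comp hm1
  -- pointwise Cauchy-Schwarz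
  have step1 : ∀ x : ℝ, ENNReal.ofReal ((avg ε Φ x) ^ 2) ≤ cellAvg ε (sqE Φ) (x / ε) := by
    intro x
    rw [ofReal_sq]
    have hmz : Measurable fun z =>
        Φ (ε * ((⌊x / ε⌋ : ℤ) : ℝ) + ε * z) (Int.fract (x / ε)) :=
      hmeas.comp (((measurable_id.const_mul ε).const_add
        (ε * ((⌊x / ε⌋ : ℤ) : ℝ))).prodMk measurable_const)
    calc ((‖avg ε Φ x‖₊ : ℝ≥0∞)) ^ 2
        ≤ (∫⁻ z in Ioo (0:ℝ) 1,
            (‖Φ (ε * ((⌊x / ε⌋ : ℤ) : ℝ) + ε * z) (Int.fract (x / ε))‖₊ : ℝ≥0∞)) ^ 2 :=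
          pow_le_pow_left₀ zero_le (enorm_integral_le_lintegral_enorm _) 2
      _ ≤ ∫⁻ z in Ioo (0:ℝ) 1,
            ((‖Φ (ε * ((⌊x / ε⌋ : ℤ) : ℝ) + ε * z) (Int.fract (x / ε))‖₊ : ℝ≥0∞)) ^ 2 :=
          sq_lintegral_le _ hmz.nnnorm.coe_nnreal_ennreal.aemeasurable
      _ = cellAvg ε (sqE Φ) (x / ε) := rfl

  have hB := unfold_eq hε N hNε (sqE Φ) hFm
  -- measurability of the averaged function
  have hgsm : StronglyMeasurable (avg ε Φ) :=
    StronglyMeasurable.integral_prod_right' (ν := volume.restrict (Ioo (0:ℝ) 1))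
      hΨm.stronglyMeasurable
  have hsm : AEStronglyMeasurable (fun x => (avg ε Φ x) ^ 2) (volume.restrict (Ioo (0:ℝ) 1)) := by
    simp_rw [sq]
    exact (hgsm.mul hgsm).aestronglyMeasurable
  -- rewrite both sides via lintegrals
  have hOF : ∀ q : ℝ × ℝ, ENNReal.ofReal ((Φ q.1 q.2) ^ 2) = sqE Φ q.1 q.2 := fun q =>
    ofReal_sq _
  have hRHS1 : (∫ q, (Φ q.1 q.2) ^ 2
        ∂((volume.restrict (Ioo (0:ℝ) 1)).prod (volume.restrict (Ioo (0:ℝ) 1))))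
      = ∫ x in Ioo (0:ℝ) 1, ∫ y in Ioo (0:ℝ) 1, (Φ x y) ^ 2 := integral_prod _ hint
  have hRHS2 : (∫ q, (Φ q.1 q.2) ^ 2
        ∂((volume.restrict (Ioo (0:ℝ) 1)).prod (volume.restrict (Ioo (0:ℝ) 1))))
      = (∫⁻ q, sqE Φ q.1 q.2
          ∂((volume.restrict (Ioo (0:ℝ) 1)).prod (volume.restrict (Ioo (0:ℝ) 1)))).toReal := by
    rw [integral_eq_lintegral_of_nonneg_ae (ae_of_all _ fun q => sq_nonneg _) hint.1]
    congr 1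
    exact lintegral_congr hOF
  have hRHS3 : (∫⁻ q, sqE Φ q.1 q.2
        ∂((volume.restrict (Ioo (0:ℝ) 1)).prod (volume.restrict (Ioo (0:ℝ) 1))))
      = ∫⁻ x in Ioo (0:ℝ) 1, ∫⁻ y in Ioo (0:ℝ) 1, sqE Φ x y :=
    lintegral_prod _ hFm.aemeasurable
  have hfin : (∫⁻ x in Ioo (0:ℝ) 1, ∫⁻ y in Ioo (0:ℝ) 1, sqE Φ x y) ≠ ⊤ := by
    rw [← hRHS3]
    have h2 : (∫⁻ q, (‖(Φ q.1 q.2) ^ 2‖₊ : ℝ≥0∞)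
        ∂((volume.restrict (Ioo (0:ℝ) 1)).prod (volume.restrict (Ioo (0:ℝ) 1)))) < ⊤ := hint.2
    refine ne_of_lt (lt_of_le_of_lt (le_of_eq (lintegral_congr fun q => ?_)) h2)
    unfold sqE
    simp [nnnorm_pow]
  have hLHS : (∫ x in Ioo (0:ℝ) 1, (avg ε Φ x) ^ 2)
      = (∫⁻ x in Ioo (0:ℝ) 1, ENNReal.ofReal ((avg ε Φ x) ^ 2)).toReal := by
    rw [integral_eq_lintegral_of_nonneg_ae (ae_of_all _ fun x => sq_nonneg _) hsm]
  rw [hLHS, ← hRHS1, hRHS2, hRHS3]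
  refine ENNReal.toReal_mono hfin ?_
  exact le_trans (lintegral_mono step1) (le_of_eq hB)

end Stmt18Aux

open Stmt18Aux

set_option maxHeartbeats 1000000

/-- The averaging (folding) operator is an `L²`-contraction: with
`ε = 2^{-λ}`, `D = Y = (0,1)` and
`(𝒰^ε Φ)(x) = ∫_0^1 Φ(ε⌊x/ε⌋ + εz, {x/ε}) dz`, one has
`‖𝒰^ε Φ‖_{L²(D)} ≤ ‖Φ‖_{L²(D×Y)}` for all `Φ ∈ L²(D×Y)`. -/
theorem stmt_18 (l : ℕ) (Φ : ℝ → ℝ → ℝ)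
    (hmeas : Measurable (Function.uncurry Φ))
    (hint : Integrable (fun q : ℝ × ℝ => (Φ q.1 q.2) ^ 2)
      ((volume.restrict (Set.Ioo (0:ℝ) 1)).prod (volume.restrict (Set.Ioo (0:ℝ) 1)))) :
    ∫ x in Set.Ioo (0:ℝ) 1,
        (∫ z in Set.Ioo (0:ℝ) 1,
            Φ ((2:ℝ) ^ (-(l:ℤ)) * ((⌊x / (2:ℝ) ^ (-(l:ℤ))⌋ : ℤ) : ℝ)
                + (2:ℝ) ^ (-(l:ℤ)) * z)
              (Int.fract (x / (2:ℝ) ^ (-(l:ℤ))))) ^ 2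
      ≤ ∫ x in Set.Ioo (0:ℝ) 1, ∫ y in Set.Ioo (0:ℝ) 1, (Φ x y) ^ 2 := by
  have hε : (0:ℝ) < (2:ℝ) ^ (-(l:ℤ)) := by positivity
  have hNε : ((2 ^ l : ℕ) : ℝ) * (2:ℝ) ^ (-(l:ℤ)) = 1 := by
    push_cast
    rw [← zpow_natCast (2:ℝ) l, ← zpow_add₀ (by norm_num : (2:ℝ) ≠ 0)]
    simp
  exact main_aux hε (2 ^ l) hNε Φ hmeas hint
end
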